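/- Let $V$ be a finite-dimensional complex normed vector space, let $\|\cdot\|_{\mathrm{op}}$ denote the operator norm on $\mathrm{End}(V)$, and let $\mathrm{id}_V$ be the identity map. Suppose $x, y$ are linear isometries of $V$ which generate a finite subgroup of $\mathrm{GL}(V)$. If $\|\mathrm{id}_V - x\|_{\mathrm{op}} < 1/2$ and $\|\mathrm{id}_V - y\|_{\mathrm{op}} < 1/2$, then $x y = y x$. -/

import Mathlib

open ContinuousLinearMap Polynomial Matrix

section aux

variable {V : Type*} [NormedAddCommGroup V] [NormedSpace ℂ V]

lemma aux_norm_iso_mul (g a : V →L[ℂ] V) (hg : ∀ w, ‖g w‖ = ‖w‖) :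
    ‖g * a‖ = ‖a‖ := by
  apply le_antisymm
  · refine opNorm_le_bound _ (norm_nonneg a) fun w => ?_
    rw [ContinuousLinearMap.mul_apply, hg]
    exact a.le_opNorm w
  · refine opNorm_le_bound _ (norm_nonneg _) fun w => ?_
    calc ‖a w‖ = ‖g (a w)‖ := (hg _).symm
    _ = ‖(g * a) w‖ := rfl
    _ ≤ ‖g * a‖ * ‖w‖ := le_opNorm _ w

lemma aux_sum_pos {s : Multiset ℝ} (h : ∀ x ∈ s, 0 < x) (hs : s ≠ 0) : 0 < s.sum := by
  induction s using Multiset.induction with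
  | empty => exact absurd rfl hs
  | cons a s ih =>
    rw [Multiset.sum_cons]
    have ha : 0 < a := h a (Multiset.mem_cons_self a s)
    rcases eq_or_ne s 0 with rfl | hs'
    · simpa using ha
    · exact add_pos ha (ih (fun x hx => h x (Multiset.mem_cons_of_mem hx)) hs')

lemma aux_eigen_of_root {E : Type*} [AddCommGroup E] [Module ℂ E] [FiniteDimensional ℂ E]
    (f : Module.End ℂ E) {ν : ℂ} (hν : ν ∈ f.charpoly.roots) :
    ∃ z : E, z ≠ 0 ∧ f z = ν • z := by
  classical
  set b := Module.finBasis ℂ E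
  set M := LinearMap.toMatrix b b f with hMdef
  have hch : M.charpoly = f.charpoly := LinearMap.charpoly_toMatrix f b
  have hroot : M.charpoly.IsRoot ν := by
    rw [hch]
    exact isRoot_of_mem_roots hν
  have hdet0 : (Matrix.diagonal (fun _ => ν) - M).det = 0 := by
    have h1 : ((charmatrix M).map (Polynomial.evalRingHom ν)).det = 0 := by
      have hd := (Polynomial.evalRingHom ν).map_det (charmatrix M)
      rw [RingHom.mapMatrix_apply] at hd
      rw [← hd]
      simpa [Matrix.charpoly] using hroot
    have h2 : (charmatrix M).map (Polynomial.evalRingHom ν)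
        = Matrix.diagonal (fun _ => ν) - M := by
      ext i j
      rcases eq_or_ne i j with rfl | hij
      · simp [charmatrix_apply_eq, Matrix.map_apply, Matrix.sub_apply]
      · simp [charmatrix_apply_ne _ _ _ hij, Matrix.map_apply, Matrix.sub_apply,
          Matrix.diagonal_apply_ne _ hij]
    rwa [h2] at h1
  obtain ⟨g, hg0, hg⟩ := Matrix.exists_mulVec_eq_zero_iff.mpr hdet0
  have hMg : M.mulVec g = ν • g := by
    rw [Matrix.sub_mulVec] at hg
    have hdiag : Matrix.diagonal (fun _ => ν) *ᵥ g = ν • g := by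
      funext i
      simp [Matrix.mulVec_diagonal]
    rw [hdiag] at hg
    exact (sub_eq_zero.mp hg).symm
  refine ⟨b.equivFun.symm g, ?_, ?_⟩
  · simp only [ne_eq, map_eq_zero_iff _ b.equivFun.symm.injective]
    exact hg0
  · apply b.equivFun.injective
    have hrepr : (b.repr (b.equivFun.symm g) : _ → ℂ) = g := by
      funext i
      rw [← b.equivFun_apply, b.equivFun.apply_symm_apply]
    have hmv := LinearMap.toMatrix_mulVec_repr b b f (b.equivFun.symm g)
    rw [← hMdef] at hmv
    have hfz : (b.repr (f (b.equivFun.symm g)) : _ → ℂ) = ν • g := by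
      rw [← hmv]
      funext i
      rw [hrepr] at hmv ⊢
      rw [hMg]
    have h3 : b.equivFun (f (b.equivFun.symm g)) = ν • g := by
      funext i
      rw [b.equivFun_apply, hfz]
    rw [h3, _root_.map_smul, b.equivFun.apply_symm_apply]

end aux

/-- If two linear isometries `x, y` of a finite-dimensional complex normed
vector space generate a finite subgroup of `GL(V)` and both satisfy
`‖id - ·‖ < 1/2` in the operator norm, then they commute. -/
theorem commute_of_close_to_id
    (V : Type*) [NormedAddCommGroup V] [NormedSpace ℂ V] [FiniteDimensional ℂ V]
    (x y : (V →L[ℂ] V)ˣ)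
    (hxiso : ∀ v : V, ‖(x : V →L[ℂ] V) v‖ = ‖v‖)
    (hyiso : ∀ v : V, ‖(y : V →L[ℂ] V) v‖ = ‖v‖)
    (hfin : Finite (Subgroup.closure {x, y} : Subgroup (V →L[ℂ] V)ˣ))
    (hx : ‖(1 : V →L[ℂ] V) - x‖ < 1 / 2)
    (hy : ‖(1 : V →L[ℂ] V) - y‖ < 1 / 2) :
    x * y = y * x := by
  classical
  by_contra hne
  set G := Subgroup.closure ({x, y} : Set (V →L[ℂ] V)ˣ) with hGdef
  -- every element of G is an isometry
  have hiso : ∀ g : (V →L[ℂ] V)ˣ, g ∈ G → ∀ w : V, ‖(g : V →L[ℂ] V) w‖ = ‖w‖ := by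
    intro g hg
    refine Subgroup.closure_induction ?_ ?_ ?_ ?_ hg
    · intro a ha
      rcases ha with rfl | ha
      · exact hxiso
      · rcases ha with rfl
        exact hyiso
    · intro w; simp
    · intro a b _ _ iha ihb w
      have : ((a * b : (V →L[ℂ] V)ˣ) : V →L[ℂ] V) w
          = (a : V →L[ℂ] V) ((b : V →L[ℂ] V) w) := by
        rw [Units.val_mul]; rfl
      rw [this, iha, ihb]
    · intro a _ iha w
      have h1 : (a : V →L[ℂ] V) (((a⁻¹ : (V →L[ℂ] V)ˣ) : V →L[ℂ] V) w) = w := by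
        rw [← ContinuousLinearMap.mul_apply, ← Units.val_mul, mul_inv_cancel,
          Units.val_one, ContinuousLinearMap.one_apply]
      calc ‖((a⁻¹ : (V →L[ℂ] V)ˣ) : V →L[ℂ] V) w‖
          = ‖(a : V →L[ℂ] V) (((a⁻¹ : (V →L[ℂ] V)ˣ) : V →L[ℂ] V) w)‖ := (iha _).symm
      _ = ‖w‖ := by rw [h1]
  -- the set of noncommuting pairs
  set T : Set ((V →L[ℂ] V)ˣ × (V →L[ℂ] V)ˣ) :=
    {p | p.1 ∈ G ∧ p.2 ∈ G ∧ ‖(1 : V →L[ℂ] V) - p.1‖ < 1 / 2 ∧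
      ‖(1 : V →L[ℂ] V) - p.2‖ < 1 / 2 ∧ p.1 * p.2 ≠ p.2 * p.1} with hTdef
  have hxG : x ∈ G := Subgroup.subset_closure (by simp)
  have hyG : y ∈ G := Subgroup.subset_closure (by simp)
  have hxyT : (x, y) ∈ T := ⟨hxG, hyG, hx, hy, hne⟩
  have hGsetfin : (G : Set (V →L[ℂ] V)ˣ).Finite := by
    have : Finite (G : Set (V →L[ℂ] V)ˣ) := hfin
    exact Set.toFinite _
  have hTfin : T.Finite := by
    refine Set.Finite.subset (hGsetfin.prod hGsetfin) ?_
    intro p hp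
    exact ⟨hp.1, hp.2.1⟩
  obtain ⟨⟨u, v⟩, hpT, hmin⟩ := Set.exists_min_image T
    (fun p => ‖(1 : V →L[ℂ] V) - p.1‖ + ‖(1 : V →L[ℂ] V) - p.2‖) hTfin ⟨(x, y), hxyT⟩
  obtain ⟨huG, hvG, hu, hv, huv⟩ := hpT
  -- positivity of the norms
  have hupos : 0 < ‖(1 : V →L[ℂ] V) - u‖ := by
    rcases (norm_nonneg ((1 : V →L[ℂ] V) - u)).lt_or_eq with h | h
    · exact h
    · exfalso
      have : (1 : V →L[ℂ] V) - u = 0 := by rwa [eq_comm, norm_eq_zero] at h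
      have hu1 : (u : V →L[ℂ] V) = 1 := by
        have := sub_eq_zero.mp this
        exact this.symm
      have : u = 1 := by
        ext1; rw [hu1, Units.val_one]
      exact huv (by rw [this, one_mul, mul_one])
  have hvpos : 0 < ‖(1 : V →L[ℂ] V) - v‖ := by
    rcases (norm_nonneg ((1 : V →L[ℂ] V) - v)).lt_or_eq with h | h
    · exact h
    · exfalso
      have : (1 : V →L[ℂ] V) - v = 0 := by rwa [eq_comm, norm_eq_zero] at h
      have hv1 : (v : V →L[ℂ] V) = 1 := (sub_eq_zero.mp this).symm
      have : v = 1 := by ext1; rw [hv1, Units.val_one]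
      exact huv (by rw [this, one_mul, mul_one])
  -- the commutator
  set c : (V →L[ℂ] V)ˣ := u⁻¹ * v⁻¹ * u * v with hcdef
  have hcG : c ∈ G := by
    exact mul_mem (mul_mem (mul_mem (inv_mem huG) (inv_mem hvG)) huG) hvG
  have hc1 : c ≠ 1 := by
    intro h
    apply huv
    have h2 : v * u * (u⁻¹ * v⁻¹ * u * v) = v * u * 1 := by rw [← hcdef, h]
    have h3 : v * u * (u⁻¹ * v⁻¹ * u * v) = u * v := by group
    rw [h3, mul_one] at h2
    exact h2
  -- norm of the commutator
  have hw1 : ((((v * u)⁻¹ : (V →L[ℂ] V)ˣ)) : V →L[ℂ] V) * ((v : V →L[ℂ] V) * u) = 1 := by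
    rw [← Units.val_mul, ← Units.val_mul, ← Units.val_one]
    congr 1
    group
  have hcw2 : (v * u)⁻¹ * (u * v) = c := by
    rw [hcdef]; group
  have hw2 : ((((v * u)⁻¹ : (V →L[ℂ] V)ˣ)) : V →L[ℂ] V) * ((u : V →L[ℂ] V) * v) = c := by
    rw [← Units.val_mul, ← Units.val_mul]
    exact congrArg Units.val hcw2
  have hkey1 : (1 : V →L[ℂ] V) - c
      = (((v * u)⁻¹ : (V →L[ℂ] V)ˣ) : V →L[ℂ] V) * ((v : V →L[ℂ] V) * u - (u : V →L[ℂ] V) * v) := by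
    rw [mul_sub, hw1, hw2]
  have hcnorm : ‖(1 : V →L[ℂ] V) - c‖ ≤ 2 * ‖(1 : V →L[ℂ] V) - u‖ * ‖(1 : V →L[ℂ] V) - v‖ := by
    rw [hkey1, aux_norm_iso_mul _ _ (hiso _ (inv_mem (mul_mem hvG huG)))]
    have e2 : (v : V →L[ℂ] V) * u - (u : V →L[ℂ] V) * v
        = ((1 : V →L[ℂ] V) - v) * ((1 : V →L[ℂ] V) - u)
          - ((1 : V →L[ℂ] V) - u) * ((1 : V →L[ℂ] V) - v) := by
      noncomm_ring
    rw [e2]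
    calc ‖((1 : V →L[ℂ] V) - v) * ((1 : V →L[ℂ] V) - u)
        - ((1 : V →L[ℂ] V) - u) * ((1 : V →L[ℂ] V) - v)‖
        ≤ ‖((1 : V →L[ℂ] V) - v) * ((1 : V →L[ℂ] V) - u)‖
          + ‖((1 : V →L[ℂ] V) - u) * ((1 : V →L[ℂ] V) - v)‖ := norm_sub_le _ _
    _ ≤ ‖(1 : V →L[ℂ] V) - v‖ * ‖(1 : V →L[ℂ] V) - u‖
          + ‖(1 : V →L[ℂ] V) - u‖ * ‖(1 : V →L[ℂ] V) - v‖ :=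
        add_le_add (norm_mul_le _ _) (norm_mul_le _ _)
    _ = 2 * ‖(1 : V →L[ℂ] V) - u‖ * ‖(1 : V →L[ℂ] V) - v‖ := by ring
  have hcu' : ‖(1 : V →L[ℂ] V) - c‖ < ‖(1 : V →L[ℂ] V) - u‖ := by nlinarith
  have hcv' : ‖(1 : V →L[ℂ] V) - c‖ < ‖(1 : V →L[ℂ] V) - v‖ := by nlinarith
  have hchalf : ‖(1 : V →L[ℂ] V) - c‖ < 1 / 2 := lt_trans hcv' hv
  -- c commutes with u and v by minimality
  have hcu : u * c = c * u := by
    by_contra hcu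
    have hqT : ((u, c) : _ × _) ∈ T := ⟨huG, hcG, hu, hchalf, hcu⟩
    have := hmin (u, c) hqT
    simp only at this
    linarith
  have hcv : c * v = v * c := by
    by_contra hcv
    have hqT : ((c, v) : _ × _) ∈ T := ⟨hcG, hvG, hchalf, hv, hcv⟩
    have := hmin (c, v) hqT
    simp only at this
    linarith
  -- key relation : u v = v u c
  have hrelu : u * v = v * u * c := by
    rw [hcdef]; group
  have hrel : (u : V →L[ℂ] V) * v = (v : V →L[ℂ] V) * u * c := by
    rw [← Units.val_mul, ← Units.val_mul, ← Units.val_mul]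
    exact congrArg Units.val hrelu
  -- move to linear maps
  haveI := hfin
  set Cl : V →L[ℂ] V := (c : V →L[ℂ] V) with hCldef
  set C : Module.End ℂ V := (Cl : V →ₗ[ℂ] V) with hCdef
  have hcu_pt : ∀ z : V, Cl ((u : V →L[ℂ] V) z) = (u : V →L[ℂ] V) (Cl z) := by
    intro z
    have h := congrArg Units.val hcu
    rw [Units.val_mul, Units.val_mul] at h
    exact (DFunLike.congr_fun h z).symm
  have hcv_pt : ∀ z : V, Cl ((v : V →L[ℂ] V) z) = (v : V →L[ℂ] V) (Cl z) := by
    intro z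
    have h := congrArg Units.val hcv
    rw [Units.val_mul, Units.val_mul] at h
    exact DFunLike.congr_fun h z
  -- c has finite order
  set cG : G := ⟨c, hcG⟩ with hcGdef
  set n := orderOf cG with hndef
  have hnpos : 0 < n := orderOf_pos cG
  have hcn : Cl ^ n = 1 := by
    have h := pow_orderOf_eq_one cG
    have h2 : c ^ n = 1 := by
      have := congrArg (Subtype.val : G → (V →L[ℂ] V)ˣ) h
      rwa [SubmonoidClass.coe_pow] at this
    have h3 : Cl ^ n = ((c ^ n : (V →L[ℂ] V)ˣ) : V →L[ℂ] V) :=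
      (Units.val_pow_eq_pow_val c n).symm
    rw [h3, h2, Units.val_one]
  have hCl_ne : Cl ≠ 1 := by
    intro h
    apply hc1
    ext1
    rw [← hCldef, h, Units.val_one]
  -- find an eigenvalue ≠ 1 of C
  have hC1ne : C - 1 ≠ 0 := by
    intro h
    apply hCl_ne
    ext z
    have := DFunLike.congr_fun h z
    have h2 : C z = z := by simpa [LinearMap.sub_apply, sub_eq_zero] using this
    simp only [ContinuousLinearMap.one_apply]; exact h2
  set W₀ := LinearMap.range (C - 1) with hW₀def
  have hW₀ne : W₀ ≠ ⊥ := by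
    rw [hW₀def, ne_eq, LinearMap.range_eq_bot]
    exact hC1ne
  have hW₀inv : ∀ z ∈ W₀, C z ∈ W₀ := by
    rintro _ ⟨z, rfl⟩
    exact ⟨C z, by simp [LinearMap.sub_apply, map_sub]⟩
  haveI : Nontrivial W₀ := Submodule.nontrivial_iff_ne_bot.mpr hW₀ne
  obtain ⟨μ, hμ⟩ := Module.End.exists_eigenvalue (C.restrict hW₀inv)
  obtain ⟨wt, hwt⟩ := hμ.exists_hasEigenvector
  set w : V := (wt : V) with hwdef
  have hw0 : w ≠ 0 := fun h => hwt.2 (Subtype.ext h)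
  have hCw : Cl w = μ • w := by
    have h := hwt.apply_eq_smul
    have h2 := congrArg (Subtype.val : W₀ → V) h
    rwa [LinearMap.restrict_coe_apply] at h2
  have hμ1 : μ ≠ 1 := by
    rintro rfl
    obtain ⟨z, hz⟩ := wt.2
    have hCz : Cl z = z + w := by
      have : C z - z = w := by
        have := hz
        rwa [LinearMap.sub_apply, Module.End.one_apply] at this
      rw [← this]; abel
    have hClw : Cl w = w := by rw [hCw, one_smul]
    have hkw : ∀ k : ℕ, (Cl ^ k) w = w := by
      intro k
      induction k with
      | zero => simp
      | succ k ih => rw [pow_succ, ContinuousLinearMap.mul_apply, hClw, ih]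
    have hkz : ∀ k : ℕ, (Cl ^ k) z = z + (k : ℂ) • w := by
      intro k
      induction k with
      | zero => simp
      | succ k ih =>
        rw [pow_succ, ContinuousLinearMap.mul_apply, hCz, map_add, ih, hkw k]
        push_cast
        rw [add_smul, one_smul]
        abel
    have := hkz n
    rw [hcn, ContinuousLinearMap.one_apply] at this
    have hnw : (n : ℂ) • w = 0 := by
      have := this.symm
      rwa [add_eq_left] at this
    rcases smul_eq_zero.mp hnw with h | h
    · exact (Nat.cast_ne_zero.mpr hnpos.ne' : (n : ℂ) ≠ 0) h
    · exact hw0 h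
  -- the eigenspace W
  set W := Module.End.eigenspace C μ with hWdef
  have hwW : w ∈ W := Module.End.mem_eigenspace_iff.mpr hCw
  have hWne : W ≠ ⊥ := Submodule.ne_bot_iff W |>.mpr ⟨w, hwW, hw0⟩
  haveI : Nontrivial W := Submodule.nontrivial_iff_ne_bot.mpr hWne
  set Ul : Module.End ℂ V := ((u : V →L[ℂ] V) : V →ₗ[ℂ] V) with hUldef
  set Vl : Module.End ℂ V := ((v : V →L[ℂ] V) : V →ₗ[ℂ] V) with hVldef
  have hUinv : ∀ z ∈ W, Ul z ∈ W := by
    intro z hz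
    rw [hWdef, Module.End.mem_eigenspace_iff] at hz ⊢
    show Cl ((u : V →L[ℂ] V) z) = μ • ((u : V →L[ℂ] V) z)
    have hz' : Cl z = μ • z := hz
    rw [hcu_pt z, hz']
    exact map_smul _ μ _
  have hVinv : ∀ z ∈ W, Vl z ∈ W := by
    intro z hz
    rw [hWdef, Module.End.mem_eigenspace_iff] at hz ⊢
    show Cl ((v : V →L[ℂ] V) z) = μ • ((v : V →L[ℂ] V) z)
    have hz' : Cl z = μ • z := hz
    rw [hcv_pt z, hz']
    exact map_smul _ μ _
  set A := Ul.restrict hUinv with hAdef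
  set B := Vl.restrict hVinv with hBdef
  -- the key twisted commutation on W
  have hABkey : A * B = μ • (B * A) := by
    apply LinearMap.ext
    intro zt
    apply Subtype.ext
    have hz : Cl (zt : V) = μ • (zt : V) := Module.End.mem_eigenspace_iff.mp zt.2
    have lhs : ((A * B) zt : V) = (u : V →L[ℂ] V) ((v : V →L[ℂ] V) (zt : V)) := by
      rw [Module.End.mul_apply, LinearMap.restrict_coe_apply, LinearMap.restrict_coe_apply]
      rfl
    have rhs : (((μ • (B * A)) zt : W) : V) = μ • ((v : V →L[ℂ] V) ((u : V →L[ℂ] V) (zt : V))) := by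
      rw [LinearMap.smul_apply, Submodule.coe_smul, Module.End.mul_apply,
        LinearMap.restrict_coe_apply, LinearMap.restrict_coe_apply]
      rfl
    rw [lhs, rhs]
    have h := DFunLike.congr_fun hrel (zt : V)
    rw [ContinuousLinearMap.mul_apply, ContinuousLinearMap.mul_apply,
      ContinuousLinearMap.mul_apply] at h
    rw [h]
    show (v : V →L[ℂ] V) ((u : V →L[ℂ] V) (Cl (zt : V))) = _
    rw [hz, ContinuousLinearMap.map_smul, ContinuousLinearMap.map_smul]
  -- trace argument
  set t := LinearMap.trace ℂ W (A * B) with htdef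
  have ht0 : t = 0 := by
    have h1 : t = μ * LinearMap.trace ℂ W (B * A) := by
      rw [htdef, hABkey, _root_.map_smul, smul_eq_mul]
    have h2 : LinearMap.trace ℂ W (B * A) = t := by
      rw [htdef, LinearMap.trace_mul_comm]
    rw [h2] at h1
    have h3 : (μ - 1) * t = 0 := by linear_combination -h1
    rcases mul_eq_zero.mp h3 with h | h
    · exact absurd (sub_eq_zero.mp h) hμ1
    · exact h
  -- trace = sum of roots of charpoly, all roots have positive real part
  have hdpos : 0 < Module.finrank ℂ W := Module.finrank_pos
  set p := (A * B).charpoly with hpdef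
  have hsum : t = p.roots.sum := by
    set b := Module.finBasis ℂ W
    rw [htdef, LinearMap.trace_eq_matrix_trace ℂ b (A * B)]
    rw [Matrix.trace_eq_sum_roots_charpoly]
    rw [hpdef, ← LinearMap.charpoly_toMatrix (A * B) b]
  have hcard : p.roots.card = Module.finrank ℂ W := by
    have hs : p.Splits := IsAlgClosed.splits p
    rw [(Polynomial.splits_iff_card_roots).mp hs, hpdef, LinearMap.charpoly_natDegree]
  have hrootpos : ∀ ν ∈ p.roots, 0 < ν.re := by
    intro ν hν
    obtain ⟨zt, hzt0, hzt⟩ := aux_eigen_of_root (A * B) hν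
    set zv : V := (zt : V) with hzvdef
    have hzv0 : zv ≠ 0 := fun h => hzt0 (Subtype.ext h)
    have hact : (u : V →L[ℂ] V) ((v : V →L[ℂ] V) zv) = ν • zv := by
      have h1 := congrArg (Subtype.val : W → V) hzt
      rw [Module.End.mul_apply, LinearMap.restrict_coe_apply, LinearMap.restrict_coe_apply,
        Submodule.coe_smul] at h1
      exact h1
    have hbnd : ‖(1 : V →L[ℂ] V) - (u : V →L[ℂ] V) * v‖
        ≤ ‖(1 : V →L[ℂ] V) - u‖ + ‖(1 : V →L[ℂ] V) - v‖ := by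
      have e : (1 : V →L[ℂ] V) - (u : V →L[ℂ] V) * v
          = ((1 : V →L[ℂ] V) - u) + (u : V →L[ℂ] V) * ((1 : V →L[ℂ] V) - v) := by
        noncomm_ring
      rw [e]
      refine le_trans (norm_add_le _ _) ?_
      rw [aux_norm_iso_mul _ _ (hiso u huG)]
    have happ : ((1 : V →L[ℂ] V) - (u : V →L[ℂ] V) * v) zv = (1 - ν) • zv := by
      rw [ContinuousLinearMap.sub_apply, ContinuousLinearMap.one_apply,
        ContinuousLinearMap.mul_apply, hact, sub_smul, one_smul]
    have hle : ‖(1 : ℂ) - ν‖ * ‖zv‖ ≤ (‖(1 : V →L[ℂ] V) - u‖ + ‖(1 : V →L[ℂ] V) - v‖) * ‖zv‖ := by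
      calc ‖(1 : ℂ) - ν‖ * ‖zv‖ = ‖((1 : ℂ) - ν) • zv‖ := (norm_smul _ _).symm
      _ = ‖((1 : V →L[ℂ] V) - (u : V →L[ℂ] V) * v) zv‖ := by rw [happ]
      _ ≤ ‖(1 : V →L[ℂ] V) - (u : V →L[ℂ] V) * v‖ * ‖zv‖ := le_opNorm _ _
      _ ≤ _ := by
        apply mul_le_mul_of_nonneg_right hbnd (norm_nonneg _)
    have hnu : ‖(1 : ℂ) - ν‖ < 1 := by
      have hzpos : 0 < ‖zv‖ := norm_pos_iff.mpr hzv0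
      have := (mul_le_mul_iff_of_pos_right hzpos).mp hle
      linarith
    have hre : 1 - ν.re ≤ ‖(1 : ℂ) - ν‖ := by
      have h5 := Complex.re_le_norm ((1 : ℂ) - ν)
      rwa [Complex.sub_re, Complex.one_re] at h5
    linarith
  -- contradiction
  have hsum_re : (p.roots.map Complex.re).sum = 0 := by
    have := congrArg Complex.re hsum
    rw [ht0] at this
    rw [← Complex.coe_reAddGroupHom, ← AddMonoidHom.map_multiset_sum]
    exact this.symm
  have hpos : 0 < (p.roots.map Complex.re).sum := by
    apply aux_sum_pos
    · intro r hr
      obtain ⟨ν, hν, rfl⟩ := Multiset.mem_map.mp hr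
      exact hrootpos ν hν
    · intro h
      have hc0 := congrArg Multiset.card h
      rw [Multiset.card_map, hcard] at hc0
      simp only [Multiset.card_zero] at hc0
      exact hdpos.ne' hc0
  rw [hsum_re] at hpos
  exact lt_irrefl 0 hpos
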